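/- Fix $\gamma > 0$. Let $\hat{C}$ be a $p\times p$ symmetric matrix with unit diagonal, let $H$ be a $p\times p$ diagonal matrix, and let $M$ be a $p\times p$ symmetric matrix with zero diagonal. Then $|\operatorname{tr}(\hat{C} H M)| \leq \frac{\gamma}{2} \|\hat{C}-I_p\|_{op,\infty} \operatorname{tr}(H^2) + \frac{1}{2\gamma} \|\hat{C}-I_p\|_{\infty} \operatorname{tr}(M^2)$, where $\|X\|_{op,\infty} = \max_i \sum_j |X_{ij}|$ and $\|X\|_{\infty} = \max_{i,j} |X_{ij}|$. -/

import Mathlib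

/-- The max-row-sum norm `‖X‖_{op,∞} = max_i ∑_j |X i j|`. -/
noncomputable def rowSumNorm {p : ℕ} (X : Matrix (Fin p) (Fin p) ℝ) : ℝ :=
  ⨆ i, ∑ j, |X i j|

/-- The entrywise max norm `‖X‖_∞ = max_{i,j} |X i j|`. -/
noncomputable def entryMaxNorm {p : ℕ} (X : Matrix (Fin p) (Fin p) ℝ) : ℝ :=
  ⨆ i, ⨆ j, |X i j|

theorem stmt_4 {p : ℕ} (hp : 0 < p) (γ : ℝ) (hγ : 0 < γ)
    (C H M : Matrix (Fin p) (Fin p) ℝ)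
    (hC : C.IsSymm) (hCd : ∀ i, C i i = 1)
    (hH : ∀ i j, i ≠ j → H i j = 0)
    (hM : M.IsSymm) (hMd : ∀ i, M i i = 0) :
    |Matrix.trace (C * H * M)| ≤
      γ / 2 * rowSumNorm (C - 1) * Matrix.trace (H * H)
        + 1 / (2 * γ) * entryMaxNorm (C - 1) * Matrix.trace (M * M) := by
  set A := C - 1 with hAdef
  have hAsym : ∀ i j, A i j = A j i := by
    intro i j
    simp only [hAdef, Matrix.sub_apply, Matrix.one_apply]
    rw [hC.apply i j]
    by_cases h : i = j <;> simp [h, eq_comm]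
  have hMsym : ∀ i j, M i j = M j i := fun i j => (hM.apply i j).symm
  -- (C*H) i j = C i j * H j j
  have h1 : ∀ i j, (C * H) i j = C i j * H j j := by
    intro i j
    rw [Matrix.mul_apply]
    exact Finset.sum_eq_single j (fun k _ hk => by rw [hH k j hk, mul_zero]) (by simp)
  have key : Matrix.trace (C * H * M) = ∑ i, ∑ j, A i j * H j j * M i j := by
    rw [Matrix.trace]
    refine Finset.sum_congr rfl fun i _ => ?_
    rw [Matrix.diag_apply, Matrix.mul_apply]
    refine Finset.sum_congr rfl fun j _ => ?_
    rw [h1, hMsym j i]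
    by_cases h : i = j
    · subst h; rw [hMd i]; ring
    · simp only [hAdef, Matrix.sub_apply, Matrix.one_apply, if_neg h, sub_zero]
  rw [key]
  have step1 : |∑ i, ∑ j, A i j * H j j * M i j| ≤
      ∑ i, ∑ j, |A i j| * (γ / 2 * H j j ^ 2 + 1 / (2 * γ) * M i j ^ 2) := by
    calc |∑ i, ∑ j, A i j * H j j * M i j|
        ≤ ∑ i, ∑ j, |A i j * H j j * M i j| := by
          refine (Finset.abs_sum_le_sum_abs _ _).trans ?_
          exact Finset.sum_le_sum fun i _ => Finset.abs_sum_le_sum_abs _ _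
      _ ≤ ∑ i, ∑ j, |A i j| * (γ / 2 * H j j ^ 2 + 1 / (2 * γ) * M i j ^ 2) := by
          refine Finset.sum_le_sum fun i _ => Finset.sum_le_sum fun j _ => ?_
          rw [abs_mul, abs_mul, mul_assoc]
          refine mul_le_mul_of_nonneg_left ?_ (abs_nonneg _)
          have h2 := sq_nonneg (γ * |H j j| - |M i j|)
          have h3 : |H j j| ^ 2 = H j j ^ 2 := sq_abs _
          have h4 : |M i j| ^ 2 = M i j ^ 2 := sq_abs _
          have h5 : |H j j| * |M i j| ≤ γ / 2 * |H j j| ^ 2 + 1 / (2 * γ) * |M i j| ^ 2 := by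
            have hkey : γ / 2 * |H j j| ^ 2 + 1 / (2 * γ) * |M i j| ^ 2 - |H j j| * |M i j|
                = (γ * |H j j| - |M i j|) ^ 2 / (2 * γ) := by
              field_simp
              ring
            have hnn : 0 ≤ (γ * |H j j| - |M i j|) ^ 2 / (2 * γ) := by positivity
            linarith [hkey ▸ hnn]
          rw [h3, h4] at h5
          exact h5
  refine step1.trans ?_
  have hbddA : ∀ i, BddAbove (Set.range fun j => |A i j|) := fun i => Set.Finite.bddAbove (Set.finite_range _)
  have hrow : ∀ j, ∑ i, |A j i| ≤ rowSumNorm A :=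
    fun j => le_ciSup (f := fun i => ∑ j, |A i j|) (Set.Finite.bddAbove (Set.finite_range _)) j
  have hent : ∀ i j, |A i j| ≤ entryMaxNorm A := by
    intro i j
    refine (le_ciSup (f := fun j => |A i j|) (hbddA i) j).trans ?_
    exact le_ciSup (f := fun i => ⨆ j, |A i j|) (Set.Finite.bddAbove (Set.finite_range _)) i
  have htrH : Matrix.trace (H * H) = ∑ j, H j j ^ 2 := by
    rw [Matrix.trace]
    refine Finset.sum_congr rfl fun i _ => ?_
    rw [Matrix.diag_apply, Matrix.mul_apply]
    rw [Finset.sum_eq_single i (fun k _ hk => by rw [hH i k (Ne.symm hk), zero_mul]) (by simp)]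
    ring
  have htrM : Matrix.trace (M * M) = ∑ i, ∑ j, M i j ^ 2 := by
    rw [Matrix.trace]
    refine Finset.sum_congr rfl fun i _ => ?_
    rw [Matrix.diag_apply, Matrix.mul_apply]
    exact Finset.sum_congr rfl fun j _ => by rw [hMsym j i]; ring
  rw [htrH, htrM]
  have expand : ∑ i, ∑ j, |A i j| * (γ / 2 * H j j ^ 2 + 1 / (2 * γ) * M i j ^ 2)
      = γ / 2 * ∑ j, (∑ i, |A i j|) * H j j ^ 2
        + 1 / (2 * γ) * ∑ j, ∑ i, |A i j| * M i j ^ 2 := by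
    rw [Finset.sum_comm (f := fun i j => |A i j| * (γ / 2 * H j j ^ 2 + 1 / (2 * γ) * M i j ^ 2))]
    rw [Finset.mul_sum, Finset.mul_sum, ← Finset.sum_add_distrib]
    refine Finset.sum_congr rfl fun j _ => ?_
    rw [Finset.sum_mul, Finset.mul_sum, Finset.mul_sum, ← Finset.sum_add_distrib]
    exact Finset.sum_congr rfl fun i _ => by ring
  rw [expand, mul_assoc (γ/2), mul_assoc (1/(2*γ))]
  refine add_le_add ?_ ?_
  · refine mul_le_mul_of_nonneg_left ?_ (by positivity)
    rw [Finset.mul_sum]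
    refine Finset.sum_le_sum fun j _ => ?_
    refine mul_le_mul_of_nonneg_right ?_ (sq_nonneg _)
    calc ∑ i, |A i j| = ∑ i, |A j i| := Finset.sum_congr rfl fun i _ => by rw [hAsym]
      _ ≤ rowSumNorm A := hrow j
  · refine mul_le_mul_of_nonneg_left ?_ (by positivity)
    rw [Finset.sum_comm (f := fun j i => |A i j| * M i j ^ 2), Finset.mul_sum]
    refine Finset.sum_le_sum fun i _ => ?_
    rw [Finset.mul_sum]
    exact Finset.sum_le_sum fun j _ => mul_le_mul_of_nonneg_right (hent i j) (sq_nonneg _)
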